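/- arXiv:1505.03248 — 2 statements merged into one kernel-verified Lean document; each statement's English description precedes it below -/
import Mathlib

section
/- For any nonempty reduced word w in F_4 in the generators g_1,...,g_4, every component of the quaternion ρ(w) has the form y/2^{m} for some algebraic integer y and m ∈ N; i.e., the algebraic denominator of each component of ρ(w) is a power of 2. -/
open Quaternion

/-- The four nontrivial vertices of the regular 4-simplex as quaternions. -/
noncomputable def q : Fin 4 → ℍ[ℝ] :=
  ![⟨-1/4, Real.sqrt 5 / 4, Real.sqrt 5 / 4, Real.sqrt 5 / 4⟩,
    ⟨-1/4, -Real.sqrt 5 / 4, -Real.sqrt 5 / 4, Real.sqrt 5 / 4⟩,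
    ⟨-1/4, Real.sqrt 5 / 4, -Real.sqrt 5 / 4, -Real.sqrt 5 / 4⟩,
    ⟨-1/4, -Real.sqrt 5 / 4, Real.sqrt 5 / 4, -Real.sqrt 5 / 4⟩]

/-- The four components of a quaternion. -/
noncomputable def comp (x : ℍ[ℝ]) : Fin 4 → ℝ := ![x.re, x.imI, x.imJ, x.imK]

/-- real numbers of the form (a + b√5)/2^m -/
def T (x : ℝ) : Prop := ∃ (a b : ℤ) (m : ℕ), x * 2 ^ m = a + b * Real.sqrt 5

lemma sqrt5_mul_self : Real.sqrt 5 * Real.sqrt 5 = 5 :=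
  Real.mul_self_sqrt (by norm_num)

lemma T_add {x y : ℝ} (hx : T x) (hy : T y) : T (x + y) := by
  obtain ⟨a, b, m, hm⟩ := hx
  obtain ⟨c, d, n, hn⟩ := hy
  refine ⟨a * 2 ^ n + c * 2 ^ m, b * 2 ^ n + d * 2 ^ m, m + n, ?_⟩
  push_cast
  rw [pow_add]
  linear_combination (2 ^ n : ℝ) * hm + (2 ^ m : ℝ) * hn

lemma T_neg {x : ℝ} (hx : T x) : T (-x) := by
  obtain ⟨a, b, m, hm⟩ := hx
  exact ⟨-a, -b, m, by push_cast; linarith⟩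

lemma T_mul {x y : ℝ} (hx : T x) (hy : T y) : T (x * y) := by
  obtain ⟨a, b, m, hm⟩ := hx
  obtain ⟨c, d, n, hn⟩ := hy
  refine ⟨a * c + 5 * b * d, a * d + b * c, m + n, ?_⟩
  push_cast
  rw [pow_add]
  linear_combination (y * 2 ^ n) * hm + ((a : ℝ) + (b : ℝ) * Real.sqrt 5) * hn
    + ((b : ℝ) * (d : ℝ)) * sqrt5_mul_self

lemma T_sub {x y : ℝ} (hx : T x) (hy : T y) : T (x - y) := by
  simpa [sub_eq_add_neg] using T_add hx (T_neg hy)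

/-- quaternions with all components in T -/
def S (x : ℍ[ℝ]) : Prop := T x.re ∧ T x.imI ∧ T x.imJ ∧ T x.imK

lemma T_one : T 1 := ⟨1, 0, 0, by norm_num⟩
lemma T_zero : T 0 := ⟨0, 0, 0, by norm_num⟩

lemma S_one : S 1 := ⟨T_one, T_zero, T_zero, T_zero⟩

lemma S_mul {x y : ℍ[ℝ]} (hx : S x) (hy : S y) : S (x * y) := by
  obtain ⟨h1, h2, h3, h4⟩ := hx
  obtain ⟨k1, k2, k3, k4⟩ := hy
  refine ⟨?_, ?_, ?_, ?_⟩
  · rw [Quaternion.re_mul]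
    exact T_sub (T_sub (T_sub (T_mul h1 k1) (T_mul h2 k2)) (T_mul h3 k3)) (T_mul h4 k4)
  · rw [Quaternion.imI_mul]
    exact T_sub (T_add (T_add (T_mul h1 k2) (T_mul h2 k1)) (T_mul h3 k4)) (T_mul h4 k3)
  · rw [Quaternion.imJ_mul]
    exact T_add (T_add (T_sub (T_mul h1 k3) (T_mul h2 k4)) (T_mul h3 k1)) (T_mul h4 k2)
  · rw [Quaternion.imK_mul]
    exact T_add (T_sub (T_add (T_mul h1 k4) (T_mul h2 k3)) (T_mul h3 k2)) (T_mul h4 k1)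

lemma T_a : T (-(1/4)) := ⟨-1, 0, 2, by norm_num⟩
lemma T_b : T (Real.sqrt 5 / 4) := ⟨0, 1, 2, by push_cast; ring⟩

lemma S_q (i : Fin 4) : S (q i) := by
  fin_cases i <;> refine ⟨?_, ?_, ?_, ?_⟩ <;>
    simp only [q, Fin.isValue, Matrix.cons_val_zero, Matrix.cons_val_one, Matrix.head_cons,
      Matrix.cons_val_two, Matrix.tail_cons, Matrix.cons_val_three, neg_div] <;>
    first
      | exact T_a
      | exact T_b
      | exact T_neg T_b

lemma S_star {x : ℍ[ℝ]} (hx : S x) : S (star x) := by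
  obtain ⟨h1, h2, h3, h4⟩ := hx
  exact ⟨by simpa using h1, by simpa using T_neg h2, by simpa using T_neg h3,
    by simpa using T_neg h4⟩

lemma q_inv (i : Fin 4) : (q i)⁻¹ = star (q i) := by
  have h : q i * star (q i) = 1 := by
    fin_cases i <;>
    · ext <;>
        simp only [Quaternion.re_mul, Quaternion.imI_mul, Quaternion.imJ_mul,
          Quaternion.imK_mul, Quaternion.re_star, Quaternion.imI_star, Quaternion.imJ_star,
          Quaternion.imK_star] <;>
        simp [q] <;>
        nlinarith [sqrt5_mul_self]
  exact inv_eq_of_mul_eq_one_right h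

/-- For every nonempty word `w` in `F₄`, each component of `ρ w` has the form
`y / 2^m` with `y` an algebraic integer: the algebraic denominator of each
component of `ρ w` is a power of 2. -/
theorem components_denominator_pow_two (ρ : FreeGroup (Fin 4) →* ℍ[ℝ])
    (hρ : ∀ i : Fin 4, ρ (FreeGroup.of i) = q i)
    (w : FreeGroup (Fin 4)) (hw : w ≠ 1) (c : Fin 4) :
    ∃ (y : ℝ) (m : ℕ), IsIntegral ℤ y ∧ comp (ρ w) c = y / 2 ^ m := by
  clear hw
  have key : S (ρ w) := by
    induction w using FreeGroup.induction_on with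
    | C1 => simpa using S_one
    | of i => rw [hρ]; exact S_q i
    | inv_of i _ =>
        rw [map_inv, hρ, q_inv]
        exact S_star (S_q i)
    | mul x y hx hy => rw [map_mul]; exact S_mul hx hy
  have sqrt5_int : IsIntegral ℤ (Real.sqrt 5) := by
    refine ⟨Polynomial.X ^ 2 - Polynomial.C 5, ?_, ?_⟩
    · apply Polynomial.monic_X_pow_sub_C <;> norm_num
    · simp [Polynomial.eval₂_sub, sq, sqrt5_mul_self]
  have intcast_int : ∀ a : ℤ, IsIntegral ℤ ((a : ℝ)) := fun a => by
    simpa using isIntegral_algebraMap (R := ℤ) (A := ℝ) (x := a)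
  have main : ∀ x : ℝ, T x → ∃ (y : ℝ) (m : ℕ), IsIntegral ℤ y ∧ x = y / 2 ^ m := by
    rintro x ⟨a, b, m, hm⟩
    refine ⟨(a : ℝ) + (b : ℝ) * Real.sqrt 5, m, ?_, ?_⟩
    · exact (intcast_int a).add ((intcast_int b).mul sqrt5_int)
    · field_simp
      linarith [hm]
  obtain ⟨h1, h2, h3, h4⟩ := key
  fin_cases c <;> simp only [comp, Matrix.cons_val_zero, Matrix.cons_val_one, Matrix.head_cons,
    Fin.isValue, Matrix.cons_val_two, Matrix.tail_cons, Matrix.cons_val_three]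
  · exact main _ h1
  · exact main _ h2
  · exact main _ h3
  · exact main _ h4
end

section
/- Let k ∈ {1,2,3}, π_k the corresponding permutation of {1,2,3,4} induced by conjugation by the quaternion unit i_k, and w ∈ F_4. If u ∈ F_4 satisfies red_k(w) = u w π_k(u)^{-1}, then the k-th imaginary component of ρ(w) equals the k-th imaginary component of ρ(red_k(w)); in particular, if red_k(w) = 1 then the k-th component of ρ(w) is 0. -/
open Quaternion

/-- The permutations `π₁ = (1,3)(2,4)`, `π₂ = (1,4)(2,3)`, `π₃ = (1,2)(3,4)` of
the simplex vertices (0-based indices), induced by conjugation by the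
quaternion units `i, j, k`. -/
def π : Fin 3 → Fin 4 → Fin 4 := ![![2, 3, 0, 1], ![3, 2, 1, 0], ![1, 0, 3, 2]]

/-- The three imaginary components of a quaternion. -/
noncomputable def imComp (x : ℍ[ℝ]) : Fin 3 → ℝ := ![x.imI, x.imJ, x.imK]

/-- The quaternion units i, j, k. -/
noncomputable def e : Fin 3 → ℍ[ℝ] := ![⟨0,1,0,0⟩, ⟨0,0,1,0⟩, ⟨0,0,0,1⟩]

lemma e_ne_zero (k : Fin 3) : e k ≠ 0 := by
  fin_cases k <;> intro h <;> simpa [e] using congrArg (fun x : ℍ[ℝ] => x.imI + x.imJ + x.imK) h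

lemma e_mul_q (k : Fin 3) (n : Fin 4) : e k * q n = q (π k n) * e k := by
  fin_cases k <;> fin_cases n <;> ext <;>
    simp [e, q, π] <;> erw [QuaternionAlgebra.mk_mul_mk, QuaternionAlgebra.mk_mul_mk] <;> simp <;> ring

lemma qconj_mul {E : ℍ[ℝ]} (hE : E ≠ 0) (a b : ℍ[ℝ]) :
    (E * a * E⁻¹) * (E * b * E⁻¹) = E * (a * b) * E⁻¹ := by
  simp [mul_assoc, inv_mul_cancel_left₀ hE]

lemma qconj_inv {E : ℍ[ℝ]} (a : ℍ[ℝ]) :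
    (E * a * E⁻¹)⁻¹ = E⁻¹⁻¹ * a⁻¹ * E⁻¹ := by
  simp [mul_inv_rev, mul_assoc]

lemma re_mul_comm (a b : ℍ[ℝ]) : (a * b).re = (b * a).re := by
  simp [Quaternion.re_mul]; ring

lemma imComp_eq_neg_re (k : Fin 3) (x : ℍ[ℝ]) : imComp x k = -((e k) * x).re := by
  fin_cases k <;> simp [e, imComp] <;> erw [QuaternionAlgebra.re_mul] <;> simp

lemma rho_map (ρ : FreeGroup (Fin 4) →* ℍ[ℝ]) (hρ : ∀ i : Fin 4, ρ (FreeGroup.of i) = q i)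
    (k : Fin 3) (u : FreeGroup (Fin 4)) :
    ρ (FreeGroup.map (π k) u) = e k * ρ u * (e k)⁻¹ := by
  induction u using FreeGroup.induction_on with
  | C1 => simp [mul_inv_cancel₀ (e_ne_zero k)]
  | of i =>
      have hp : (pure i : FreeGroup (Fin 4)) = FreeGroup.of i := rfl
      rw [FreeGroup.map.of, hρ, hρ, e_mul_q,
        mul_assoc, mul_inv_cancel₀ (e_ne_zero k), mul_one]
  | inv_of i ih =>
      rw [map_inv, map_inv, ih, qconj_inv, inv_inv, map_inv]
  | mul x y ihx ihy =>
      rw [map_mul, map_mul, map_mul, ihx, ihy, qconj_mul (e_ne_zero k)]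

/-- For `k ∈ {1,2,3}`: if `r = u * w * (π_k u)⁻¹` is a `π_k`-conjugate of `w`
(e.g. `r = red_k w`), then the `k`-th imaginary component of `ρ w` equals that
of `ρ r`; in particular if `r = 1`, the `k`-th component of `ρ w` is `0`. -/
theorem imComp_invariant_under_pi_conjugation
    (ρ : FreeGroup (Fin 4) →* ℍ[ℝ]) (hρ : ∀ i : Fin 4, ρ (FreeGroup.of i) = q i)
    (k : Fin 3) (u w r : FreeGroup (Fin 4))
    (hr : r = u * w * (FreeGroup.map (π k) u)⁻¹) :
    imComp (ρ w) k = imComp (ρ r) k ∧ (r = 1 → imComp (ρ w) k = 0) := by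
  have hu : ρ u ≠ 0 := by
    intro h
    have : (1 : ℍ[ℝ]) = 0 := by
      rw [← map_one ρ, ← mul_inv_cancel u, map_mul, h, zero_mul]
    simp at this
  have hmain : imComp (ρ w) k = imComp (ρ r) k := by
    rw [hr, map_mul, map_mul, map_inv, rho_map ρ hρ k u]
    rw [imComp_eq_neg_re, imComp_eq_neg_re]
    congr 1
    have hE := e_ne_zero k
    set a := ρ u
    set x := ρ w
    set E := e k
    rw [mul_inv_rev, mul_inv_rev, inv_inv]
    calc (E * x).re = (x * E).re := re_mul_comm _ _
      _ = ((a⁻¹ * a) * (x * E)).re := by rw [inv_mul_cancel₀ hu, one_mul]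
      _ = (a⁻¹ * (a * (x * E))).re := by rw [mul_assoc]
      _ = ((a * (x * E)) * a⁻¹).re := re_mul_comm _ _
      _ = ((E⁻¹ * E) * ((a * (x * E)) * a⁻¹)).re := by rw [inv_mul_cancel₀ hE, one_mul]
      _ = (E⁻¹ * (E * ((a * (x * E)) * a⁻¹))).re := by rw [mul_assoc]
      _ = ((E * ((a * (x * E)) * a⁻¹)) * E⁻¹).re := re_mul_comm _ _
      _ = (E * (a * x * (E * (a⁻¹ * E⁻¹)))).re := by simp [mul_assoc]
  refine ⟨hmain, fun h1 => ?_⟩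
  rw [hmain, h1, map_one]
  fin_cases k <;> simp [imComp]
end
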